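/- If φ : ℝ → ℝ is convex and α_1,...,α_d ≥ 0, then the function f(x_1,...,x_d) = φ(∑_{n=1}^d α_n x_n) is supermodular. -/

import Mathlib

lemma convex_rearrange (φ : ℝ → ℝ) (hφ : ConvexOn ℝ Set.univ φ)
    {m M a b : ℝ} (hma : m ≤ a) (haM : a ≤ M) (hab : a + b = m + M) :
    φ a + φ b ≤ φ m + φ M := by
  rcases eq_or_lt_of_le (hma.trans haM) with h | h
  · have ha : a = m := le_antisymm (h ▸ haM) hma
    have hb : b = M := by linarith
    simp [ha, hb, h]
  · set t : ℝ := (M - a) / (M - m) with ht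
    have hMm : (0:ℝ) < M - m := by linarith
    have ht0 : 0 ≤ t := div_nonneg (by linarith) hMm.le
    have ht1 : t ≤ 1 := (div_le_one hMm).2 (by linarith)
    have hsum : t + (1 - t) = 1 := by ring
    have ha' : a = t * m + (1 - t) * M := by
      rw [ht]; linear_combination div_mul_cancel₀ (M - a) hMm.ne'
    have hb' : b = (1 - t) * m + t * M := by
      have : b = m + M - a := by linarith
      rw [this, ha']; ring
    have h1 := hφ.2 (Set.mem_univ m) (Set.mem_univ M) ht0 (by linarith) hsum
    have h2 := hφ.2 (Set.mem_univ m) (Set.mem_univ M) (by linarith : (0:ℝ) ≤ 1 - t) ht0 (by ring)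
    simp only [smul_eq_mul] at h1 h2
    calc φ a + φ b = φ (t * m + (1 - t) * M) + φ ((1 - t) * m + t * M) := by rw [ha', hb']
      _ ≤ (t * φ m + (1 - t) * φ M) + ((1 - t) * φ m + t * φ M) := add_le_add h1 h2
      _ = φ m + φ M := by ring

/-- If `φ : ℝ → ℝ` is convex and `α_n ≥ 0`, then
`f(x) = φ(∑ α_n x_n)` is supermodular on `ℝ^d`. -/
theorem stmt_4 (d : ℕ) (φ : ℝ → ℝ) (hφ : ConvexOn ℝ Set.univ φ)
    (α : Fin d → ℝ) (hα : ∀ n, 0 ≤ α n) :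
    ∀ x y : Fin d → ℝ,
      φ (∑ n, α n * x n) + φ (∑ n, α n * y n) ≤
        φ (∑ n, α n * (x ⊓ y) n) + φ (∑ n, α n * (x ⊔ y) n) := by
  intro x y
  have hm : ∑ n, α n * (x ⊓ y) n ≤ ∑ n, α n * x n :=
    Finset.sum_le_sum fun n _ => mul_le_mul_of_nonneg_left (inf_le_left : (x ⊓ y) n ≤ x n) (hα n)
  have hM : ∑ n, α n * x n ≤ ∑ n, α n * (x ⊔ y) n :=
    Finset.sum_le_sum fun n _ => mul_le_mul_of_nonneg_left (le_sup_left : x n ≤ (x ⊔ y) n) (hα n)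
  have hab : (∑ n, α n * x n) + (∑ n, α n * y n)
      = (∑ n, α n * (x ⊓ y) n) + (∑ n, α n * (x ⊔ y) n) := by
    rw [← Finset.sum_add_distrib, ← Finset.sum_add_distrib]
    refine Finset.sum_congr rfl fun n _ => ?_
    have : (x ⊓ y) n + (x ⊔ y) n = x n + y n := by
      simp [Pi.inf_apply, Pi.sup_apply, min_add_max]
    linear_combination (-(α n)) * this
  exact convex_rearrange φ hφ hm hM hab
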